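/- Let A = ℤ⟨X,Y⟩ and p a prime. For every sequence (ε₀, ε₁, ε₂, ...) with all ε_n ∈ [A,A], there exists a sequence (r₀, r₁, r₂, ...) ∈ A^{ℕ₀} with r₀ = ε₀ such that for every n ≥ 0 the ghost component ω_n(r₀,...,r_n) = r₀^{p^n} + p·r₁^{p^{n−1}} + ... + p^n·r_n lies in [A,A]. -/

import Mathlib

/-- Words in the two letters `X, Y`. -/
abbrev FW := FreeMonoid (Fin 2)

/-- `A = ℤ⟨X,Y⟩`. -/
abbrev A2 := MonoidAlgebra ℤ FW

/-- The set of commutators of `A`, generating `[A,A]`. -/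
def commA : Set A2 := {x | ∃ a b : A2, x = a * b - b * a}

/-- The `n`-th ghost polynomial `ω_n(a₀,...,a_n) = a₀^{pⁿ} + p·a₁^{pⁿ⁻¹} + ⋯ + pⁿ·a_n`. -/
noncomputable def ghost (p : ℕ) (a : ℕ → A2) (n : ℕ) : A2 :=
  ∑ i ∈ Finset.range (n + 1), (p : A2) ^ i * (a i) ^ p ^ (n - i)

namespace S15
open FreeMonoid List

instance rotSetoid : Setoid FW where
  r u v := u.toList ~r v.toList
  iseqv := ⟨fun _ => IsRotated.refl _, IsRotated.symm, IsRotated.trans⟩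

lemma rel_iff {u v : FW} : u ≈ v ↔ u.toList ~r v.toList := Iff.rfl

abbrev RC := Quotient rotSetoid

def qc (w : FW) : RC := ⟦w⟧

lemma qc_mul_comm (u v : FW) : qc (u * v) = qc (v * u) := by
  refine Quotient.sound ?_
  rw [rel_iff, toList_mul, toList_mul]
  exact List.isRotated_append

lemma toList_pow (u : FW) (m : ℕ) :
    (u ^ m).toList = (List.replicate m u.toList).flatten := by
  induction m with
  | zero => simp [toList_one]
  | succ m ih => rw [pow_succ', List.replicate_succ, List.flatten_cons, ← ih, toList_mul]

lemma join_replicate_append (a b : List (Fin 2)) (m : ℕ) :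
    (List.replicate m (a ++ b)).flatten ++ a = a ++ (List.replicate m (b ++ a)).flatten := by
  induction m with
  | zero => simp
  | succ m ih =>
      rw [List.replicate_succ, List.replicate_succ, List.flatten_cons, List.flatten_cons]
      simp only [List.append_assoc, ih]

lemma isRotated_join_replicate {l l' : List (Fin 2)} (h : l ~r l') (m : ℕ) :
    (List.replicate m l).flatten ~r (List.replicate m l').flatten := by
  obtain ⟨n, rfl⟩ := h
  rcases eq_or_ne l [] with rfl | hl
  · simp
  rcases Nat.eq_zero_or_pos m with rfl | hm
  · simp
  have hlen : 0 < l.length := List.length_pos_iff.2 hl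
  have hn : n % l.length ≤ l.length := le_of_lt (Nat.mod_lt _ hlen)
  rw [← List.rotate_mod, List.rotate_eq_drop_append_take hn]
  set a := l.take (n % l.length) with ha
  set b := l.drop (n % l.length) with hb
  have hl2 : l = a ++ b := (List.take_append_drop _ l).symm
  rw [hl2]
  -- goal : (replicate m (a++b)).flatten ~r (replicate m (b++a)).flatten
  have key := join_replicate_append a b m
  -- (replicate m (a++b)).flatten = a ++ X for some X
  obtain ⟨c, hc⟩ : ∃ c, (List.replicate m (a ++ b)).flatten = a ++ c := by
    rcases Nat.exists_eq_add_of_le hm with ⟨m', rfl⟩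
    refine ⟨b ++ (List.replicate m' (a ++ b)).flatten, ?_⟩
    rw [add_comm, List.replicate_succ, List.flatten_cons, List.append_assoc]
  have hc' : (List.replicate m (b ++ a)).flatten = c ++ a := by
    have : a ++ (c ++ a) = a ++ (List.replicate m (b ++ a)).flatten := by
      rw [← List.append_assoc, ← hc, key]
    exact (List.append_cancel_left this).symm
  rw [hc, hc']
  exact ⟨a.length, by rw [List.rotate_append_length_eq]⟩

lemma qc_pow_of_rel {u v : FW} (h : u ≈ v) (m : ℕ) : qc (u ^ m) = qc (v ^ m) := by
  refine Quotient.sound ?_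
  rw [rel_iff, toList_pow, toList_pow]
  exact isRotated_join_replicate h m

end S15

namespace S15
open FreeMonoid Finsupp

lemma a2_induction {p : A2 → Prop} (x : A2) (h0 : p 0)
    (hadd : ∀ a b : A2, p a → p b → p (a + b))
    (hsingle : ∀ (w : FW) (c : ℤ), p (MonoidAlgebra.single w c)) : p x :=
  MonoidAlgebra.induction_linear x h0 hadd hsingle

noncomputable def tau : A2 →ₗ[ℤ] (RC →₀ ℤ) :=
  Finsupp.lmapDomain ℤ ℤ qc ∘ₗ (MonoidAlgebra.coeffLinearEquiv ℤ).toLinearMap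

noncomputable def Psi (p : ℕ) : A2 →ₗ[ℤ] (RC →₀ ℤ) :=
  Finsupp.lmapDomain ℤ ℤ (fun w => qc (w ^ p)) ∘ₗ (MonoidAlgebra.coeffLinearEquiv ℤ).toLinearMap

noncomputable def Psib (p : ℕ) : (RC →₀ ℤ) →ₗ[ℤ] (RC →₀ ℤ) :=
  Finsupp.lmapDomain ℤ ℤ
    (Quotient.lift (fun w => qc (w ^ p)) (fun _ _ h => qc_pow_of_rel h p))

lemma tau_single (w : FW) (a : ℤ) :
    tau (MonoidAlgebra.single w a) = Finsupp.single (qc w) a :=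
  (Finsupp.mapDomain_single : Finsupp.mapDomain qc (Finsupp.single w a) = _)

lemma Psi_single (p : ℕ) (w : FW) (a : ℤ) :
    Psi p (MonoidAlgebra.single w a) = Finsupp.single (qc (w ^ p)) a :=
  (Finsupp.mapDomain_single : Finsupp.mapDomain (fun w => qc (w ^ p)) (Finsupp.single w a) = _)

lemma Psib_single (p : ℕ) (c : RC) (a : ℤ) :
    Psib p (Finsupp.single c a) =
      Finsupp.single (Quotient.lift (fun w => qc (w ^ p))
        (fun _ _ h => qc_pow_of_rel h p) c) a :=
  Finsupp.mapDomain_single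

lemma Psi_eq_Psib_tau (p : ℕ) (x : A2) : Psi p x = Psib p (tau x) := by
  induction x using a2_induction with
  | h0 => simp
  | hadd a b ha hb => rw [map_add, map_add, map_add, ha, hb]
  | hsingle w a =>
      rw [tau_single, Psi_single, Psib_single]
      rfl

lemma tau_mul_comm (x y : A2) : tau (x * y) = tau (y * x) := by
  induction x using a2_induction with
  | h0 => simp
  | hadd a b ha hb => rw [add_mul, mul_add, map_add, map_add, ha, hb]
  | hsingle w a =>
      induction y using a2_induction with
      | h0 => simp
      | hadd c d hc hd => rw [add_mul, mul_add, map_add, map_add, hc, hd]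
      | hsingle v b =>
          rw [MonoidAlgebra.single_mul_single, MonoidAlgebra.single_mul_single,
            tau_single, tau_single, qc_mul_comm, mul_comm]

noncomputable def lft : (RC →₀ ℤ) → A2 := fun G => MonoidAlgebra.ofCoeff (Finsupp.mapDomain Quotient.out G)

lemma lft_add (G H : RC →₀ ℤ) : lft (G + H) = lft G + lft H :=
  congrArg MonoidAlgebra.ofCoeff Finsupp.mapDomain_add

lemma tau_lft (G : RC →₀ ℤ) : tau (lft G) = G := by
  show Finsupp.mapDomain qc (Finsupp.mapDomain Quotient.out G) = G
  rw [← Finsupp.mapDomain_comp]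
  have : qc ∘ Quotient.out = id := by
    funext c
    exact Quotient.out_eq c
  rw [this, Finsupp.mapDomain_id]

lemma sub_lft_tau_mem (x : A2) : x - lft (tau x) ∈ AddSubgroup.closure commA := by
  induction x using a2_induction with
  | h0 => simpa [lft] using AddSubgroup.zero_mem (AddSubgroup.closure commA)
  | hadd a b ha hb =>
      have heq : a + b - lft (tau (a + b)) = (a - lft (tau a)) + (b - lft (tau b)) := by
        rw [map_add, lft_add]; abel
      rw [heq]; exact AddSubgroup.add_mem _ ha hb
  | hsingle w a =>
      rw [tau_single]
      have hl : lft (Finsupp.single (qc w) a)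
          = MonoidAlgebra.single (Quotient.out (qc w)) a :=
            congrArg MonoidAlgebra.ofCoeff Finsupp.mapDomain_single
      rw [hl]
      set o : FW := Quotient.out (qc w) with ho
      have hrel0 : o ≈ w := Quotient.mk_out w
      have hrel : w.toList ~r o.toList := (rel_iff.1 hrel0).symm
      obtain ⟨n, hn⟩ := hrel
      rcases eq_or_ne w.toList [] with hnil | hne
      · have : o = w := by
          apply FreeMonoid.toList.injective
          rw [← hn, hnil]; simp
        rw [this]
        simpa using AddSubgroup.zero_mem (AddSubgroup.closure commA)
      · have hlen : 0 < w.toList.length := List.length_pos_iff.2 hne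
        have hle : n % w.toList.length ≤ w.toList.length := le_of_lt (Nat.mod_lt _ hlen)
        set u : FW := FreeMonoid.ofList (w.toList.take (n % w.toList.length)) with hu
        set v : FW := FreeMonoid.ofList (w.toList.drop (n % w.toList.length)) with hv
        have h1 : w = u * v := by
          apply FreeMonoid.toList.injective
          rw [toList_mul, hu, hv, toList_ofList, toList_ofList, List.take_append_drop]
        have h2 : o = v * u := by
          apply FreeMonoid.toList.injective
          rw [← hn, ← List.rotate_mod, List.rotate_eq_drop_append_take hle,
            toList_mul, hu, hv, toList_ofList, toList_ofList]
        rw [h1, h2]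
        apply AddSubgroup.subset_closure
        exact ⟨MonoidAlgebra.single u a, MonoidAlgebra.single v (1:ℤ), by
          rw [MonoidAlgebra.single_mul_single, MonoidAlgebra.single_mul_single,
            mul_one, one_mul]⟩

lemma mem_S_of_tau_eq_zero {x : A2} (h : tau x = 0) :
    x ∈ AddSubgroup.closure commA := by
  have h2 := sub_lft_tau_mem x
  rw [h] at h2
  simpa [lft] using h2

lemma tau_eq_zero_of_mem_S {x : A2} (h : x ∈ AddSubgroup.closure commA) :
    tau x = 0 := by
  induction h using AddSubgroup.closure_induction with
  | mem y hy =>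
      obtain ⟨a, b, rfl⟩ := hy
      rw [map_sub, tau_mul_comm, sub_self]
  | zero => exact map_zero _
  | add a b _ _ ha hb => rw [map_add, ha, hb, add_zero]
  | neg a _ ha => rw [map_neg, ha, neg_zero]

end S15
namespace S15
open Finsupp FreeMonoid

section comb

variable (z : A2)

/-- the alphabet: support of `z` -/
abbrev alpha := {w : FW // w ∈ z.coeff.support}

def wrd {L : ℕ} (g : ZMod L → alpha z) : FW :=
  (List.ofFn fun i : Fin L => ((g ((i : ℕ) : ZMod L) : alpha z) : FW)).prod

def cf {L : ℕ} [NeZero L] (g : ZMod L → alpha z) : ℤ :=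
  ∏ x : ZMod L, z.coeff ((g x : alpha z) : FW)

lemma pow_expand (L : ℕ) :
    z ^ L = ∑ g : Fin L → alpha z,
      MonoidAlgebra.single ((List.ofFn fun i => ((g i : alpha z) : FW)).prod)
        (∏ i, z.coeff ((g i : alpha z) : FW)) := by
  induction L with
  | zero =>
      rw [pow_zero, Fintype.sum_unique]
      simp [MonoidAlgebra.one_def]
  | succ L ih =>
      have hz : z = ∑ a : alpha z, MonoidAlgebra.single (a : FW) (z.coeff (a : FW)) := by
        rw [Finset.sum_coe_sort z.coeff.support (fun w => MonoidAlgebra.single w (z.coeff w))]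
        exact (MonoidAlgebra.sum_coeff_single z).symm
      rw [pow_succ', ih]
      nth_rewrite 1 [hz]
      rw [Finset.sum_mul_sum]
      rw [← Equiv.sum_comp (Fin.consEquiv (fun _ : Fin (L+1) => alpha z))
        (fun g : Fin (L+1) → alpha z =>
          MonoidAlgebra.single ((List.ofFn fun i => ((g i : alpha z) : FW)).prod)
            (∏ i, z.coeff ((g i : alpha z) : FW))), Fintype.sum_prod_type]
      refine Finset.sum_congr rfl fun a _ => Finset.sum_congr rfl fun g _ => ?_
      rw [MonoidAlgebra.single_mul_single]
      congr 1
      · rw [List.ofFn_succ, List.prod_cons]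
        simp [Fin.consEquiv]
      · rw [Fin.prod_univ_succ]
        simp [Fin.consEquiv]

def zmodFinEquiv (L : ℕ) [NeZero L] : Fin L ≃ ZMod L where
  toFun i := ((i : ℕ) : ZMod L)
  invFun x := ⟨x.val, x.val_lt⟩
  left_inv i := by
    ext
    simp [ZMod.val_natCast_of_lt i.isLt]
  right_inv x := ZMod.natCast_zmod_val x

def funEquiv (L : ℕ) [NeZero L] : (Fin L → alpha z) ≃ (ZMod L → alpha z) :=
  Equiv.arrowCongr (zmodFinEquiv L) (Equiv.refl _)

lemma funEquiv_at_cast {L : ℕ} [NeZero L] (g : Fin L → alpha z) (i : Fin L) :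
    funEquiv z L g ((i : ℕ) : ZMod L) = g i := by
  show g ((zmodFinEquiv L).symm ((zmodFinEquiv L) i)) = g i
  rw [Equiv.symm_apply_apply]

lemma wrd_funEquiv {L : ℕ} [NeZero L] (g : Fin L → alpha z) :
    wrd z (funEquiv z L g) = (List.ofFn fun i => ((g i : alpha z) : FW)).prod := by
  unfold wrd
  have h : (fun i : Fin L => (((funEquiv z L g) ((i : ℕ) : ZMod L) : alpha z) : FW))
      = fun i => ((g i : alpha z) : FW) := by
    funext i
    rw [funEquiv_at_cast]
  rw [h]

lemma cf_funEquiv {L : ℕ} [NeZero L] (g : Fin L → alpha z) :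
    cf z (funEquiv z L g) = ∏ i, z.coeff ((g i : alpha z) : FW) := by
  unfold cf
  rw [← Equiv.prod_comp (zmodFinEquiv L) (fun x => z.coeff (((funEquiv z L g) x : alpha z) : FW))]
  refine Finset.prod_congr rfl fun i _ => ?_
  show z.coeff (((funEquiv z L g) ((i : ℕ) : ZMod L) : alpha z) : FW) = _
  rw [funEquiv_at_cast]

lemma tau_pow (L : ℕ) [NeZero L] :
    tau (z ^ L) = ∑ g : ZMod L → alpha z, Finsupp.single (qc (wrd z g)) (cf z g) := by
  rw [pow_expand, map_sum]
  simp only [tau_single]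
  refine Fintype.sum_equiv (funEquiv z L) _ _ fun g => ?_
  rw [wrd_funEquiv, cf_funEquiv]

lemma psi_pow (p L : ℕ) [NeZero L] :
    Psi p (z ^ L) = ∑ g : ZMod L → alpha z,
      Finsupp.single (qc ((wrd z g) ^ p)) (cf z g) := by
  rw [pow_expand, map_sum]
  simp only [Psi_single]
  refine Fintype.sum_equiv (funEquiv z L) _ _ fun g => ?_
  rw [wrd_funEquiv, cf_funEquiv]

def shf {L : ℕ} (k : ZMod L) (g : ZMod L → alpha z) : ZMod L → alpha z :=
  fun x => g (x + k)

lemma shf_zero {L : ℕ} (g : ZMod L → alpha z) : shf z 0 g = g := by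
  funext x; simp [shf]

lemma shf_shf {L : ℕ} (k k' : ZMod L) (g : ZMod L → alpha z) :
    shf z k (shf z k' g) = shf z (k' + k) g := by
  funext x
  unfold shf
  congr 1
  ring

lemma cf_shf {L : ℕ} [NeZero L] (k : ZMod L) (g : ZMod L → alpha z) :
    cf z (shf z k g) = cf z g := by
  unfold cf shf
  exact Equiv.prod_comp (Equiv.addRight k) (fun x => z.coeff ((g x : alpha z) : FW))

lemma qc_wrd_shf_one {L : ℕ} [NeZero L] (g : ZMod L → alpha z) :
    qc (wrd z (shf z 1 g)) = qc (wrd z g) := by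
  rcases Nat.exists_eq_succ_of_ne_zero (NeZero.ne L) with ⟨m, rfl⟩
  set F : ℕ → FW := fun t => ((g ((t : ℕ) : ZMod (m+1)) : alpha z) : FW) with hF
  have key1 : (List.ofFn fun i : Fin (m+1) => ((g ((i : ℕ) : ZMod (m+1)) : alpha z) : FW))
      = F 0 :: List.ofFn (fun i : Fin m => F ((i : ℕ) + 1)) := by
    rw [List.ofFn_succ]
    simp [hF, Fin.val_succ]
  have hentry : ∀ i : Fin (m+1),
      (((shf z 1 g) ((i : ℕ) : ZMod (m+1)) : alpha z) : FW) = F ((i : ℕ) + 1) := by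
    intro i
    have hc : (((i : ℕ) : ZMod (m+1)) + 1) = (((i : ℕ) + 1 : ℕ) : ZMod (m+1)) := by
      push_cast
      ring
    simp only [shf, hF, hc]
  have key2 : (List.ofFn fun i : Fin (m+1) => (((shf z 1 g) ((i : ℕ) : ZMod (m+1)) : alpha z) : FW))
      = List.ofFn (fun i : Fin m => F ((i : ℕ) + 1)) ++ [F 0] := by
    simp only [hentry]
    rw [List.ofFn_succ']
    rw [List.concat_eq_append]
    have h1 : (fun i : Fin m => F (((i.castSucc : Fin (m+1)) : ℕ) + 1))
        = fun i : Fin m => F ((i : ℕ) + 1) := by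
      funext i
      rw [Fin.coe_castSucc]
    have h2 : F (((Fin.last m : Fin (m+1)) : ℕ) + 1) = F 0 := by
      simp only [hF, Fin.val_last]
      congr 1
      simp only [Nat.cast_add, Nat.cast_one, Nat.cast_zero, ZMod.natCast_self']
    rw [h1, h2]
  unfold wrd
  rw [key1, key2, List.prod_cons, List.prod_append, List.prod_cons, List.prod_nil, mul_one]
  exact qc_mul_comm _ _

lemma qc_wrd_shf {L : ℕ} [NeZero L] (k : ZMod L) (g : ZMod L → alpha z) :
    qc (wrd z (shf z k g)) = qc (wrd z g) := by
  have hnat : ∀ t : ℕ, qc (wrd z (shf z (t : ZMod L) g)) = qc (wrd z g) := by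
    intro t
    induction t with
    | zero => rw [Nat.cast_zero, shf_zero]
    | succ t ih =>
        have : shf z ((t + 1 : ℕ) : ZMod L) g = shf z 1 (shf z (t : ZMod L) g) := by
          rw [shf_shf]
          congr 1
          push_cast
          ring
        rw [this, qc_wrd_shf_one, ih]
  have := hnat k.val
  rwa [ZMod.natCast_zmod_val] at this

end comb
end S15
namespace S15
open Finsupp FreeMonoid

section comb2
variable (z : A2)

lemma ofFn_periodic_prod (b c : ℕ) (F : ℕ → FW) (hb : ∀ t, F (t + b) = F t) :
    (List.ofFn fun i : Fin (b*c) => F (i : ℕ)).prod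
      = ((List.ofFn fun i : Fin b => F (i : ℕ)).prod) ^ c := by
  have hmul : ∀ s t, F (t + b * s) = F t := by
    intro s
    induction s with
    | zero => intro t; rw [Nat.mul_zero, Nat.add_zero]
    | succ s ih =>
        intro t
        rw [Nat.mul_succ, ← Nat.add_assoc, hb, ih]
  induction c with
  | zero =>
      show (List.ofFn fun i : Fin 0 => F (i : ℕ)).prod = _
      rw [List.ofFn_zero, List.prod_nil, pow_zero]
  | succ c ih =>
      show (List.ofFn fun i : Fin (b*c + b) => F (i : ℕ)).prod = _
      rw [List.ofFn_add, List.prod_append]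
      have h1 : (fun i : Fin (b*c) => F ((Fin.castLE (Nat.le_add_right (b*c) b) i : ℕ)))
          = fun i : Fin (b*c) => F (i : ℕ) := by
        funext i; rfl
      have h2 : (fun i : Fin b => F ((Fin.natAdd (b*c) i : ℕ)))
          = fun i : Fin b => F (i : ℕ) := by
        funext i
        rw [Fin.coe_natAdd, Nat.add_comm, hmul]
      rw [h1, h2, ih, pow_succ]

def pb {L M : ℕ} (h : M ∣ L) (g : ZMod M → alpha z) : ZMod L → alpha z :=
  fun x => g (ZMod.castHom h (ZMod M) x)

lemma pb_injective {L M : ℕ} [NeZero L] [NeZero M] (h : M ∣ L) :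
    Function.Injective (pb z h) := by
  intro g g' he
  funext y
  have h1 : ZMod.castHom h (ZMod M) ((y.val : ℕ) : ZMod L) = y := by
    rw [map_natCast, ZMod.natCast_zmod_val]
  have := congrFun he ((y.val : ℕ) : ZMod L)
  unfold pb at this
  rwa [h1] at this

lemma wrd_pb (m c : ℕ) [NeZero m] [NeZero (m*c)] (g : ZMod m → alpha z) :
    wrd z (pb z (⟨c, rfl⟩ : m ∣ m*c) g) = (wrd z g) ^ c := by
  unfold wrd pb
  have he : (fun i : Fin (m*c) =>
      ((g (ZMod.castHom (⟨c, rfl⟩ : m ∣ m*c) (ZMod m) ((i : ℕ) : ZMod (m*c))) : alpha z) : FW))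
      = fun i : Fin (m*c) => ((g ((i : ℕ) : ZMod m) : alpha z) : FW) := by
    funext i
    rw [map_natCast]
  rw [he]
  exact ofFn_periodic_prod m c (fun t => ((g ((t : ℕ) : ZMod m) : alpha z) : FW))
    (fun t => by
      have hc : ((t + m : ℕ) : ZMod m) = ((t : ℕ) : ZMod m) := by
        push_cast
        rw [ZMod.natCast_self, add_zero]
      beta_reduce
      rw [hc])

noncomputable def blockEquiv (m c : ℕ) [NeZero m] [NeZero c] [NeZero (m*c)] :
    ZMod m × Fin c ≃ ZMod (m*c) := by
  refine Equiv.ofBijective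
    (fun yt => ((yt.1.val + m * (yt.2 : ℕ) : ℕ) : ZMod (m*c))) ?_
  rw [Fintype.bijective_iff_injective_and_card]
  constructor
  · rintro ⟨y, t⟩ ⟨y', t'⟩ he
    have hlt : ∀ (a : ZMod m) (s : Fin c), a.val + m * (s : ℕ) < m * c := by
      intro a s
      calc a.val + m * (s : ℕ) < m + m * (s : ℕ) := by
            exact Nat.add_lt_add_right a.val_lt _
        _ = m * ((s : ℕ) + 1) := by ring
        _ ≤ m * c := Nat.mul_le_mul_left m s.isLt
    have hv := congrArg ZMod.val he
    rw [ZMod.val_natCast_of_lt (hlt y t), ZMod.val_natCast_of_lt (hlt y' t')] at hv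
    have hy : y.val = y'.val := by
      have h1 := congrArg (· % m) hv
      simpa [Nat.add_mul_mod_self_left, Nat.mod_eq_of_lt y.val_lt,
        Nat.mod_eq_of_lt y'.val_lt] using h1
    have ht : (t : ℕ) = (t' : ℕ) := by
      rw [hy] at hv
      have := Nat.add_left_cancel hv
      exact Nat.eq_of_mul_eq_mul_left (Nat.pos_of_ne_zero (NeZero.ne m)) this
    exact Prod.ext (ZMod.val_injective _ hy) (Fin.ext ht)
  · rw [Fintype.card_prod, ZMod.card, ZMod.card, Fintype.card_fin]

lemma castHom_blockEquiv (m c : ℕ) [NeZero m] [NeZero c] [NeZero (m*c)]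
    (y : ZMod m) (t : Fin c) :
    ZMod.castHom (⟨c, rfl⟩ : m ∣ m*c) (ZMod m) (blockEquiv m c (y, t)) = y := by
  show ZMod.castHom _ (ZMod m) (((y.val + m * (t : ℕ) : ℕ) : ZMod (m*c))) = y
  rw [map_natCast]
  push_cast
  rw [ZMod.natCast_self, zero_mul, add_zero, ZMod.natCast_zmod_val]

lemma cf_pb (m c : ℕ) [NeZero m] [NeZero c] [NeZero (m*c)] (g : ZMod m → alpha z) :
    cf z (pb z (⟨c, rfl⟩ : m ∣ m*c) g) = (cf z g) ^ c := by
  unfold cf pb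
  rw [← Equiv.prod_comp (blockEquiv m c)
    (fun x => z.coeff ((g (ZMod.castHom (⟨c, rfl⟩ : m ∣ m*c) (ZMod m) x) : alpha z) : FW))]
  have he : (fun yt : ZMod m × Fin c =>
      z.coeff ((g (ZMod.castHom (⟨c, rfl⟩ : m ∣ m*c) (ZMod m) (blockEquiv m c yt)) : alpha z) : FW))
      = fun yt => z.coeff ((g yt.1 : alpha z) : FW) := by
    funext yt
    rw [show (blockEquiv m c yt) = blockEquiv m c (yt.1, yt.2) from rfl,
      castHom_blockEquiv]
  rw [he, Fintype.prod_prod_type]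
  simp only [Finset.prod_const, Finset.card_univ, Fintype.card_fin]
  rw [Finset.prod_pow]

end comb2
end S15
namespace S15
open Finsupp FreeMonoid

section comb3
variable (z : A2)

lemma exists_mul_eq (p j : ℕ) (hp : p.Prime) {k : ZMod (p^(j+1))} (hk : k ≠ 0) :
    ∃ t : ℕ, (t : ZMod (p^(j+1))) * k = ((p^j : ℕ) : ZMod (p^(j+1))) := by
  haveI : NeZero (p^(j+1)) := NeZero.of_pos (pow_pos hp.pos _)
  set v : ℕ := k.val with hv
  have hvne : v ≠ 0 := by
    intro h
    apply hk
    have := ZMod.natCast_zmod_val k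
    rw [← hv, h] at this
    simpa using this.symm
  set a : ℕ := v.factorization p with ha
  have hdvd : p ^ a ∣ v := Nat.ordProj_dvd v p
  have hle : a ≤ j := by
    have h1 : p ^ a ≤ v := Nat.le_of_dvd (Nat.pos_of_ne_zero hvne) hdvd
    have h2 : v < p ^ (j+1) := k.val_lt
    have := lt_of_le_of_lt h1 h2
    have := (Nat.pow_lt_pow_iff_right hp.one_lt).1 this
    omega
  set u : ℕ := v / p ^ a with hu
  have hvu : p ^ a * u = v := Nat.ordProj_mul_ordCompl_eq_self v p
  have hcop : Nat.Coprime u (p ^ (j+1)) :=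
    Nat.Coprime.pow_right _ (Nat.coprime_ordCompl hp hvne).symm
  set w : (ZMod (p^(j+1)))ˣ := ZMod.unitOfCoprime u hcop with hw
  have hwu : (w : ZMod (p^(j+1))) = (u : ZMod (p^(j+1))) := ZMod.coe_unitOfCoprime u hcop
  set T : ZMod (p^(j+1)) := ((p^(j-a) : ℕ) : ZMod (p^(j+1))) * ((w⁻¹ : (ZMod (p^(j+1)))ˣ) : ZMod (p^(j+1))) with hT
  refine ⟨T.val, ?_⟩
  rw [ZMod.natCast_zmod_val]
  have hk' : k = ((v : ℕ) : ZMod (p^(j+1))) := (ZMod.natCast_zmod_val k).symm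
  rw [hk', ← hvu, hT]
  push_cast
  have hpow : ((p : ZMod (p^(j+1)))^(j-a)) * ((p : ZMod (p^(j+1)))^a) = (p : ZMod (p^(j+1)))^j := by
    rw [← pow_add, Nat.sub_add_cancel hle]
  have hinv : ((w⁻¹ : (ZMod (p^(j+1)))ˣ) : ZMod (p^(j+1))) * (u : ZMod (p^(j+1))) = 1 := by
    rw [← hwu, ← Units.val_mul, inv_mul_cancel, Units.val_one]
  calc (p : ZMod (p^(j+1)))^(j-a) * ((w⁻¹ : (ZMod (p^(j+1)))ˣ) : ZMod (p^(j+1)))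
        * ((p : ZMod (p^(j+1)))^a * (u : ZMod (p^(j+1))))
      = ((p : ZMod (p^(j+1)))^(j-a) * (p : ZMod (p^(j+1)))^a)
        * (((w⁻¹ : (ZMod (p^(j+1)))ˣ) : ZMod (p^(j+1))) * (u : ZMod (p^(j+1)))) := by ring
    _ = (p : ZMod (p^(j+1)))^j := by rw [hpow, hinv, mul_one]

lemma shf_nat_mul {L : ℕ} (k : ZMod L) (g : ZMod L → alpha z) (hk : shf z k g = g) :
    ∀ t : ℕ, shf z ((t : ZMod L) * k) g = g := by
  intro t
  induction t with
  | zero => rw [Nat.cast_zero, zero_mul, shf_zero]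
  | succ t ih =>
      have : ((t + 1 : ℕ) : ZMod L) * k = (t : ZMod L) * k + k := by push_cast; ring
      rw [this, ← shf_shf, ih, hk]

lemma shf_pb_periodic {L : ℕ} (b : ℕ) (g : ZMod L → alpha z)
    (hper : shf z ((b : ℕ) : ZMod L) g = g) :
    ∀ s : ℕ, shf z ((b * s : ℕ) : ZMod L) g = g := by
  intro s
  induction s with
  | zero => rw [Nat.mul_zero, Nat.cast_zero, shf_zero]
  | succ s ih =>
      have : ((b * (s+1) : ℕ) : ZMod L) = ((b*s : ℕ) : ZMod L) + ((b:ℕ) : ZMod L) := by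
        push_cast; ring
      rw [this, ← shf_shf, ih, hper]

lemma dichotomy (p j : ℕ) (hp : p.Prime) (g : ZMod (p^(j+1)) → alpha z) :
    (∃ h : ZMod (p^j) → alpha z, g = pb z (pow_dvd_pow p (Nat.le_succ j)) h)
      ∨ (∀ k : ZMod (p^(j+1)), shf z k g = g → k = 0) := by
  haveI : NeZero (p^(j+1)) := NeZero.of_pos (pow_pos hp.pos _)
  haveI : NeZero (p^j) := NeZero.of_pos (pow_pos hp.pos _)
  by_cases hfree : ∀ k : ZMod (p^(j+1)), shf z k g = g → k = 0
  · exact Or.inr hfree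
  · left
    push_neg at hfree
    obtain ⟨k, hk, hkne⟩ := hfree
    obtain ⟨t, ht⟩ := exists_mul_eq p j hp hkne
    have hper : shf z ((p^j : ℕ) : ZMod (p^(j+1))) g = g := by
      rw [← ht]; exact shf_nat_mul z k g hk t
    refine ⟨fun y => g ((y.val : ℕ) : ZMod (p^(j+1))), ?_⟩
    funext x
    unfold pb
    have hcast : ZMod.castHom (pow_dvd_pow p (Nat.le_succ j)) (ZMod (p^j)) x
        = ((x.val : ℕ) : ZMod (p^j)) := by
      conv_lhs => rw [← ZMod.natCast_zmod_val x]
      rw [map_natCast]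
    rw [hcast]
    show g x = g ((( ((x.val : ℕ) : ZMod (p^j)) ).val : ℕ) : ZMod (p^(j+1)))
    rw [ZMod.val_natCast]
    have hsplit : x = ((x.val % p^j : ℕ) : ZMod (p^(j+1)))
        + ((p^j * (x.val / p^j) : ℕ) : ZMod (p^(j+1))) := by
      conv_lhs => rw [← ZMod.natCast_zmod_val x]
      rw [← Nat.cast_add]
      congr 1
      rw [Nat.mod_add_div]
    have := shf_pb_periodic z (p^j) g hper (x.val / p^j)
    have h2 : g (((x.val % p^j : ℕ) : ZMod (p^(j+1)))
        + ((p^j * (x.val / p^j) : ℕ) : ZMod (p^(j+1))))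
        = g (((x.val % p^j : ℕ) : ZMod (p^(j+1)))) := by
      exact congrFun this _
    conv_lhs => rw [hsplit]
    exact h2

lemma orbit_sum {L : ℕ} [NeZero L] {M : Type*} [AddCommGroup M]
    (Fn : (ZMod L → alpha z) → M)
    (hinv : ∀ k g, Fn (shf z k g) = Fn g) :
    ∀ (s : Finset (ZMod L → alpha z)),
      (∀ g ∈ s, ∀ k, shf z k g ∈ s) →
      (∀ g ∈ s, ∀ k, shf z k g = g → k = 0) →
      ∃ G : M, ∑ g ∈ s, Fn g = (L : ℤ) • G := by
  classical
  intro s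
  induction s using Finset.strongInduction with
  | _ s ih =>
    intro hcl hfree
    rcases s.eq_empty_or_nonempty with rfl | ⟨g₀, hg₀⟩
    · exact ⟨0, by simp⟩
    · set O : Finset (ZMod L → alpha z) :=
        Finset.image (fun k : ZMod L => shf z k g₀) Finset.univ with hO
      have hOsub : O ⊆ s := by
        intro x hx
        rw [hO, Finset.mem_image] at hx
        obtain ⟨k, _, rfl⟩ := hx
        exact hcl g₀ hg₀ k
      have hinj : Function.Injective (fun k : ZMod L => shf z k g₀) := by
        intro k k' he
        simp only [] at he
        have h1 : shf z (-k') (shf z k g₀) = shf z (-k') (shf z k' g₀) := by rw [he]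
        rw [shf_shf, shf_shf, add_neg_cancel, shf_zero] at h1
        have := hfree g₀ hg₀ (k + -k') h1
        have : k - k' = 0 := by rwa [sub_eq_add_neg]
        exact sub_eq_zero.1 this
      have hg₀O : g₀ ∈ O := by
        rw [hO, Finset.mem_image]
        exact ⟨0, Finset.mem_univ _, shf_zero z g₀⟩
      have hOsum : ∑ x ∈ O, Fn x = (L : ℤ) • Fn g₀ := by
        rw [hO, Finset.sum_image (fun a _ b _ h => hinj h)]
        rw [Finset.sum_congr rfl (fun k _ => hinv k g₀), Finset.sum_const,
          Finset.card_univ, ZMod.card]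
        exact (natCast_zsmul _ _).symm
      have hss : s \ O ⊂ s := Finset.sdiff_ssubset hOsub ⟨g₀, hg₀O⟩
      have hcl' : ∀ g ∈ s \ O, ∀ k, shf z k g ∈ s \ O := by
        intro g hg k
        rw [Finset.mem_sdiff] at hg ⊢
        refine ⟨hcl g hg.1 k, ?_⟩
        intro hmem
        apply hg.2
        rw [hO, Finset.mem_image] at hmem
        obtain ⟨k', _, hk'⟩ := hmem
        have : g = shf z (k' + -k) g₀ := by
          rw [← shf_shf, hk', shf_shf, add_neg_cancel, shf_zero]
        rw [hO, Finset.mem_image]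
        exact ⟨k' + -k, Finset.mem_univ _, this.symm⟩
      have hfree' : ∀ g ∈ s \ O, ∀ k, shf z k g = g → k = 0 := by
        intro g hg
        exact hfree g (Finset.mem_sdiff.1 hg).1
      obtain ⟨G', hG'⟩ := ih (s \ O) hss hcl' hfree'
      refine ⟨Fn g₀ + G', ?_⟩
      rw [← Finset.sum_sdiff hOsub, hG', hOsum, smul_add]
      abel

end comb3
end S15
namespace S15
open Finsupp FreeMonoid

section comb4
variable (z : A2) (p : ℕ)

lemma int_fermat (hp : p.Prime) (m : ℤ) : (p : ℤ) ∣ m ^ p - m := by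
  haveI : Fact p.Prime := ⟨hp⟩
  rw [← ZMod.intCast_zmod_eq_zero_iff_dvd]
  push_cast
  rw [ZMod.pow_card]
  ring

lemma int_pow_dvd (hp : p.Prime) (m : ℤ) (i : ℕ) :
    ((p : ℤ) ^ (i+1)) ∣ m ^ (p^(i+1)) - m ^ (p^i) := by
  have h := dvd_sub_pow_of_dvd_sub (int_fermat p hp m) i
  have h2 : (m ^ p) ^ (p ^ i) = m ^ (p^(i+1)) := by
    rw [← pow_mul, ← pow_succ']
  rw [h2] at h
  have h3 : ((p:ℤ) ^ (i+1)) = ((p ^ (i+1) : ℕ) : ℤ) := by push_cast; ring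
  rw [h3]
  exact_mod_cast h

lemma sum_div {ι : Type*} [Fintype ι] {M : Type*} [AddCommGroup M] (d : ℤ)
    (f : ι → M) (h : ∀ x, ∃ y, f x = d • y) : ∃ G, ∑ x, f x = d • G := by
  classical
  refine ⟨∑ x, Classical.choose (h x), ?_⟩
  rw [Finset.smul_sum]
  exact Finset.sum_congr rfl (fun x _ => Classical.choose_spec (h x))

lemma single_div (hp : p.Prime) (c : RC) (m : ℤ) (i : ℕ) :
    ∃ y, Finsupp.single c (m ^ (p^(i+1)) - m ^ (p^i)) = ((p:ℤ)^(i+1)) • y := by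
  obtain ⟨e, he⟩ := int_pow_dvd p hp m i
  refine ⟨Finsupp.single c e, ?_⟩
  rw [Finsupp.smul_single, smul_eq_mul, ← he]

lemma shf_pb {L M : ℕ} (d : M ∣ L) (k : ZMod L) (h : ZMod M → alpha z) :
    shf z k (pb z d h) = pb z d (shf z (ZMod.castHom d (ZMod M) k) h) := by
  funext x
  unfold shf pb
  rw [map_add]

/-- the summand in the recursion -/
noncomputable def trm (q0 i : ℕ) {L : ℕ} [NeZero L] (g : ZMod L → alpha z) : RC →₀ ℤ :=
  Finsupp.single (qc ((wrd z g) ^ q0)) ((cf z g)^(p^(i+1)) - (cf z g)^(p^i))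

lemma trm_shf_inv (q0 i : ℕ) {L : ℕ} [NeZero L] (k : ZMod L) (g : ZMod L → alpha z) :
    trm z p q0 i (shf z k g) = trm z p q0 i g := by
  have hq : qc ((wrd z (shf z k g))^q0) = qc ((wrd z g)^q0) :=
    qc_pow_of_rel (Quotient.exact (qc_wrd_shf z k g)) q0
  unfold trm
  rw [cf_shf, hq]

lemma F_div_step (hp : p.Prime) (m q0 i : ℕ) [NeZero m] [NeZero (m*p)] (D : ℤ)
    (hdich0 : ∀ g : ZMod (m*p) → alpha z, (∃ h, g = pb z (dvd_mul_right m p) h)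
      ∨ (∀ k, shf z k g = g → k = 0))
    (IH : ∃ G, ∑ h : ZMod m → alpha z, trm z p (p * q0) (i+1) h = D • G) :
    ∃ G₁ G₂, ∑ g : ZMod (m*p) → alpha z, trm z p q0 i g
      = D • G₁ + ((p:ℤ)^(i+1) * ((m*p : ℕ) : ℤ)) • G₂ := by
  classical
  haveI : NeZero p := ⟨hp.ne_zero⟩
  set Per : (ZMod (m*p) → alpha z) → Prop := fun g => ∃ h, g = pb z (dvd_mul_right m p) h
    with hPer
  have hsplit := Finset.sum_filter_add_sum_filter_not Finset.univ Per (trm z p q0 i (L := m*p))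
  -- pullback part
  have himg : Finset.univ.filter Per = Finset.image (pb z (dvd_mul_right m p)) Finset.univ := by
    ext g
    simp only [Finset.mem_filter, Finset.mem_univ, true_and, Finset.mem_image, hPer]
    constructor
    · rintro ⟨h, rfl⟩
      exact ⟨h, rfl⟩
    · rintro ⟨h, rfl⟩
      exact ⟨h, rfl⟩
  have hpull : ∑ g ∈ Finset.univ.filter Per, trm z p q0 i g
      = ∑ h : ZMod m → alpha z, trm z p q0 i (pb z (dvd_mul_right m p) h) := by
    rw [himg, Finset.sum_image (fun a _ b _ hab => pb_injective z _ hab)]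
  have hpull2 : ∀ h : ZMod m → alpha z,
      trm z p q0 i (pb z (dvd_mul_right m p) h) = trm z p (p*q0) (i+1) h := by
    intro h
    unfold trm
    rw [wrd_pb, cf_pb]
    congr 1
    · rw [← pow_mul]
    · have e1 : ((cf z h)^p)^(p^(i+1)) = (cf z h)^(p^(i+2)) := by
        rw [← pow_mul, ← pow_succ']
      have e2 : ((cf z h)^p)^(p^i) = (cf z h)^(p^(i+1)) := by
        rw [← pow_mul, ← pow_succ']
      rw [e1, e2]
  obtain ⟨G₁, hG₁⟩ := IH
  -- free part
  have hfreepart : ∃ G₂, ∑ g ∈ Finset.univ.filter (fun g => ¬ Per g), trm z p q0 i g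
      = ((p:ℤ)^(i+1) * ((m*p : ℕ) : ℤ)) • G₂ := by
    set Fn' : (ZMod (m*p) → alpha z) → (RC →₀ ℤ) := fun g =>
      Finsupp.single (qc ((wrd z g) ^ q0))
        (((cf z g)^(p^(i+1)) - (cf z g)^(p^i)) / ((p:ℤ)^(i+1))) with hFn'
    have hFn'inv : ∀ k g, Fn' (shf z k g) = Fn' g := by
      intro k g
      have hq : qc ((wrd z (shf z k g))^q0) = qc ((wrd z g)^q0) :=
        qc_pow_of_rel (Quotient.exact (qc_wrd_shf z k g)) q0
      simp only [hFn']
      rw [cf_shf, hq]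
    have hdich : ∀ g : ZMod (m*p) → alpha z, ¬ Per g → (∀ k, shf z k g = g → k = 0) := by
      intro g hg
      rcases hdich0 g with hcase | hcase
      · exact absurd hcase hg
      · exact hcase
    have hcl : ∀ g ∈ Finset.univ.filter (fun g => ¬ Per g), ∀ k,
        shf z k g ∈ Finset.univ.filter (fun g => ¬ Per g) := by
      intro g hg k
      rw [Finset.mem_filter] at hg ⊢
      refine ⟨Finset.mem_univ _, ?_⟩
      intro hmem
      apply hg.2
      obtain ⟨h, hh⟩ := hmem
      refine ⟨shf z (ZMod.castHom (dvd_mul_right m p) (ZMod m) (-k)) h, ?_⟩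
      have : shf z (-k) (shf z k g) = g := by
        rw [shf_shf, add_neg_cancel, shf_zero]
      rw [← this, hh, shf_pb]
    have hfr : ∀ g ∈ Finset.univ.filter (fun g => ¬ Per g), ∀ k, shf z k g = g → k = 0 := by
      intro g hg
      rw [Finset.mem_filter] at hg
      exact hdich g hg.2
    obtain ⟨G₂, hG₂⟩ := orbit_sum z Fn' hFn'inv _ hcl hfr
    refine ⟨G₂, ?_⟩
    have hpt : ∀ g, trm z p q0 i (L := m*p) g = ((p:ℤ)^(i+1)) • Fn' g := by
      intro g
      rw [hFn']
      unfold trm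
      rw [Finsupp.smul_single, smul_eq_mul, Int.mul_ediv_cancel' (int_pow_dvd p hp _ i)]
    rw [Finset.sum_congr rfl (fun g _ => hpt g), ← Finset.smul_sum, hG₂, smul_smul]
  obtain ⟨G₂, hG₂⟩ := hfreepart
  refine ⟨G₁, G₂, ?_⟩
  rw [← hsplit, hpull, Finset.sum_congr rfl (fun h _ => hpull2 h), hG₁, hG₂]

end comb4
end S15
namespace S15
open Finsupp FreeMonoid

section comb5
variable (z : A2) (p : ℕ)

lemma F_div (hp : p.Prime) (j : ℕ) : ∀ q0 i : ℕ,
    haveI : NeZero (p^j) := NeZero.of_pos (pow_pos hp.pos _)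
    ∃ G, ∑ h : ZMod (p^j) → alpha z, trm z p q0 i h = ((p:ℤ)^(i+1+j)) • G := by
  haveI : NeZero p := ⟨hp.ne_zero⟩
  induction j with
  | zero =>
      intro q0 i
      refine sum_div _ _ (fun h => ?_)
      exact single_div p hp _ _ i
  | succ j ih =>
      intro q0 i
      haveI : NeZero (p^j) := NeZero.of_pos (pow_pos hp.pos _)
      haveI : NeZero (p^j * p) := NeZero.of_pos (Nat.mul_pos (pow_pos hp.pos _) hp.pos)
      have hdich0 : ∀ g : ZMod (p^j * p) → alpha z,
          (∃ h, g = pb z (dvd_mul_right (p^j) p) h) ∨ (∀ k, shf z k g = g → k = 0) :=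
        fun g => dichotomy z p j hp g
      obtain ⟨G₁, G₂, hG⟩ := F_div_step z p hp (p^j) q0 i ((p:ℤ)^((i+1)+1+j)) hdich0
        (ih (p*q0) (i+1))
      refine ⟨G₁ + G₂, ?_⟩
      have e1 : ((i+1)+1+j) = (i+1+(j+1)) := by omega
      have e2 : (p:ℤ)^(i+1) * ((p^j*p : ℕ) : ℤ) = (p:ℤ)^(i+1+(j+1)) := by
        push_cast
        rw [pow_add, pow_add, pow_succ]
        ring
      rw [e1, e2] at hG
      show ∑ h : ZMod (p^j * p) → alpha z, trm z p q0 i h = _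
      rw [hG, ← smul_add]

lemma top_split (hp : p.Prime) (m : ℕ) [NeZero m] [NeZero (m*p)]
    (hdich0 : ∀ g : ZMod (m*p) → alpha z, (∃ h, g = pb z (dvd_mul_right m p) h)
      ∨ (∀ k, shf z k g = g → k = 0)) :
    haveI : NeZero p := ⟨fun h => (NeZero.ne (m*p)) (by rw [h, Nat.mul_zero])⟩
    ∃ G, (∑ g : ZMod (m*p) → alpha z, Finsupp.single (qc (wrd z g)) (cf z g))
      = ((m*p : ℕ) : ℤ) • G
        + ∑ h : ZMod m → alpha z, Finsupp.single (qc ((wrd z h)^p)) ((cf z h)^p) := by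
  haveI : NeZero p := ⟨fun h => (NeZero.ne (m*p)) (by rw [h, Nat.mul_zero])⟩
  classical
  set Per : (ZMod (m*p) → alpha z) → Prop := fun g => ∃ h, g = pb z (dvd_mul_right m p) h
    with hPer
  set Fn : (ZMod (m*p) → alpha z) → (RC →₀ ℤ) := fun g =>
    Finsupp.single (qc (wrd z g)) (cf z g) with hFn
  have hsplit := Finset.sum_filter_add_sum_filter_not Finset.univ Per Fn
  have himg : Finset.univ.filter Per = Finset.image (pb z (dvd_mul_right m p)) Finset.univ := by
    ext g
    simp only [Finset.mem_filter, Finset.mem_univ, true_and, Finset.mem_image, hPer]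
    constructor
    · rintro ⟨h, rfl⟩
      exact ⟨h, rfl⟩
    · rintro ⟨h, rfl⟩
      exact ⟨h, rfl⟩
  have hpull : ∑ g ∈ Finset.univ.filter Per, Fn g
      = ∑ h : ZMod m → alpha z, Fn (pb z (dvd_mul_right m p) h) := by
    rw [himg, Finset.sum_image (fun a _ b _ hab => pb_injective z _ hab)]
  have hpull2 : ∀ h : ZMod m → alpha z, Fn (pb z (dvd_mul_right m p) h)
      = Finsupp.single (qc ((wrd z h)^p)) ((cf z h)^p) := by
    intro h
    simp only [hFn]
    rw [wrd_pb, cf_pb]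
  have hFninv : ∀ k g, Fn (shf z k g) = Fn g := by
    intro k g
    simp only [hFn]
    rw [cf_shf, qc_wrd_shf]
  have hcl : ∀ g ∈ Finset.univ.filter (fun g => ¬ Per g), ∀ k,
      shf z k g ∈ Finset.univ.filter (fun g => ¬ Per g) := by
    intro g hg k
    rw [Finset.mem_filter] at hg ⊢
    refine ⟨Finset.mem_univ _, ?_⟩
    intro hmem
    apply hg.2
    obtain ⟨h, hh⟩ := hmem
    refine ⟨shf z (ZMod.castHom (dvd_mul_right m p) (ZMod m) (-k)) h, ?_⟩
    have hgk : shf z (-k) (shf z k g) = g := by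
      rw [shf_shf, add_neg_cancel, shf_zero]
    rw [← hgk, hh, shf_pb]
  have hfr : ∀ g ∈ Finset.univ.filter (fun g => ¬ Per g), ∀ k, shf z k g = g → k = 0 := by
    intro g hg
    rw [Finset.mem_filter] at hg
    rcases hdich0 g with hcase | hcase
    · exact absurd hcase hg.2
    · exact hcase
  obtain ⟨G, hG⟩ := orbit_sum z Fn hFninv _ hcl hfr
  refine ⟨G, ?_⟩
  rw [← hsplit, hpull, Finset.sum_congr rfl (fun h _ => hpull2 h), hG, add_comm]

lemma key_cong (hp : p.Prime) (k : ℕ) :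
    ∃ G, tau (z ^ (p ^ (k+1))) - Psi p (z ^ (p^k)) = ((p:ℤ)^(k+1)) • G := by
  haveI : NeZero p := ⟨hp.ne_zero⟩
  haveI : NeZero (p^k) := NeZero.of_pos (pow_pos hp.pos _)
  haveI : NeZero (p^k * p) := NeZero.of_pos (Nat.mul_pos (pow_pos hp.pos _) hp.pos)
  have hdich0 : ∀ g : ZMod (p^k * p) → alpha z,
      (∃ h, g = pb z (dvd_mul_right (p^k) p) h) ∨ (∀ kk, shf z kk g = g → kk = 0) :=
    fun g => dichotomy z p k hp g
  obtain ⟨G₁, hsplit⟩ := top_split z p hp (p^k) hdich0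
  have h1 : tau (z ^ (p^(k+1)))
      = ∑ g : ZMod (p^k * p) → alpha z, Finsupp.single (qc (wrd z g)) (cf z g) :=
    tau_pow z (p^(k+1))
  have h2 : Psi p (z^(p^k))
      = ∑ h : ZMod (p^k) → alpha z, Finsupp.single (qc ((wrd z h)^p)) (cf z h) :=
    psi_pow z p (p^k)
  obtain ⟨G₂, hF⟩ := F_div z p hp k p 0
  have htrm : ∀ h : ZMod (p^k) → alpha z,
      trm z p p 0 h = Finsupp.single (qc ((wrd z h)^p)) ((cf z h)^p - cf z h) := by
    intro h
    unfold trm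
    rw [pow_one, pow_zero, pow_one]
  refine ⟨G₁ + G₂, ?_⟩
  rw [h1, h2, hsplit]
  have hsub : ((p^k*p : ℕ) : ℤ) • G₁
      + (∑ h : ZMod (p^k) → alpha z, Finsupp.single (qc ((wrd z h)^p)) ((cf z h)^p))
      - ∑ h : ZMod (p^k) → alpha z, Finsupp.single (qc ((wrd z h)^p)) (cf z h)
      = ((p^k*p : ℕ) : ℤ) • G₁
        + ∑ h : ZMod (p^k) → alpha z, Finsupp.single (qc ((wrd z h)^p)) ((cf z h)^p - cf z h) := by
    rw [add_sub_assoc, ← Finset.sum_sub_distrib]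
    congr 1
    exact Finset.sum_congr rfl (fun h _ => (Finsupp.single_sub _ _ _).symm)
  rw [hsub]
  have hcast : ((p^k*p : ℕ) : ℤ) = (p:ℤ)^(k+1) := by
    push_cast
    rw [pow_succ]
  have he : (0+1+k) = k+1 := by omega
  rw [Finset.sum_congr rfl (fun h _ => (htrm h).symm), hF, he, hcast, smul_add]

end comb5
end S15
namespace S15
open Finsupp FreeMonoid

lemma cast_pow_mul (p i : ℕ) (y : A2) : (p:A2)^i * y = ((p:ℤ)^i) • y := by
  rw [zsmul_eq_mul]
  congr 1
  rw [Int.cast_pow, Int.cast_natCast]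

lemma ghost_congr (p : ℕ) (w w' : ℕ → A2) (n : ℕ) (h : ∀ i, i ≤ n → w i = w' i) :
    ghost p w n = ghost p w' n := by
  unfold ghost
  refine Finset.sum_congr rfl (fun i hi => ?_)
  rw [Finset.mem_range] at hi
  rw [h i (by omega)]

lemma tau_ghost (p : ℕ) (w : ℕ → A2) (n : ℕ) :
    tau (ghost p w n) = ∑ i ∈ Finset.range (n+1), ((p:ℤ)^i) • tau ((w i)^(p^(n-i))) := by
  unfold ghost
  rw [map_sum]
  exact Finset.sum_congr rfl (fun i _ => by rw [cast_pow_mul, map_smul])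

lemma step_ex (p : ℕ) (hp : p.Prime) (w : ℕ → A2) (n : ℕ)
    (h : tau (ghost p w n) = 0) :
    ∃ x, tau (ghost p (Function.update w (n+1) x) (n+1)) = 0 := by
  classical
  have hgform : ∀ x : A2, ghost p (Function.update w (n+1) x) (n+1)
      = (∑ i ∈ Finset.range (n+1), (p:A2)^i * (w i)^(p^(n+1-i))) + (p:A2)^(n+1) * x := by
    intro x
    unfold ghost
    rw [Finset.sum_range_succ]
    congr 1
    · refine Finset.sum_congr rfl (fun i hi => ?_)
      rw [Finset.mem_range] at hi
      rw [Function.update_of_ne (by omega)]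
    · rw [Function.update_self, Nat.sub_self, pow_zero, pow_one]
  have hkey : ∀ i : ℕ, ∃ G, i ≤ n →
      tau ((w i)^(p^(n+1-i))) = Psi p ((w i)^(p^(n-i))) + ((p:ℤ)^(n+1-i)) • G := by
    intro i
    by_cases hi : i ≤ n
    · have hni : n+1-i = (n-i)+1 := by omega
      obtain ⟨G, hG⟩ := key_cong (w i) p hp (n-i)
      refine ⟨G, fun _ => ?_⟩
      rw [hni, ← hG]
      abel
    · exact ⟨0, fun hle => absurd hle hi⟩
  choose Gf hGf using hkey
  have hterm : ∀ i ∈ Finset.range (n+1), tau ((p:A2)^i * (w i)^(p^(n+1-i)))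
      = Psib p (((p:ℤ)^i) • tau ((w i)^(p^(n-i)))) + ((p:ℤ)^(n+1)) • Gf i := by
    intro i hi
    rw [Finset.mem_range] at hi
    have hi' : i ≤ n := by omega
    rw [cast_pow_mul, map_smul, hGf i hi', smul_add, Psi_eq_Psib_tau, ← map_smul]
    congr 1
    rw [smul_smul, ← pow_add]
    congr 2
    omega
  set Gtot : RC →₀ ℤ := ∑ i ∈ Finset.range (n+1), Gf i with hGtot
  refine ⟨lft (-Gtot), ?_⟩
  rw [hgform, map_add, map_sum, Finset.sum_congr rfl hterm, Finset.sum_add_distrib,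
    ← map_sum (Psib p), ← tau_ghost, h, map_zero, zero_add, ← Finset.smul_sum, ← hGtot,
    cast_pow_mul, map_smul, tau_lft, smul_neg, add_neg_cancel]

open Classical in
/-- the recursively constructed approximations -/
noncomputable def Tseq (p : ℕ) (hp : p.Prime) (e0 : A2) : ℕ → ℕ → A2 :=
  fun n => Nat.rec (motive := fun _ => ℕ → A2)
    (fun m => if m = 0 then e0 else 0)
    (fun n prev => Function.update prev (n+1)
      (if h : tau (ghost p prev n) = 0 then Classical.choose (step_ex p hp prev n h) else 0))
    n

open Classical in
lemma Tseq_succ (p : ℕ) (hp : p.Prime) (e0 : A2) (n : ℕ) :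
    Tseq p hp e0 (n+1) = Function.update (Tseq p hp e0 n) (n+1)
      (if h : tau (ghost p (Tseq p hp e0 n) n) = 0
        then Classical.choose (step_ex p hp (Tseq p hp e0 n) n h) else 0) := rfl

lemma Tseq_stable (p : ℕ) (hp : p.Prime) (e0 : A2) :
    ∀ n m, m ≤ n → Tseq p hp e0 n m = Tseq p hp e0 m m := by
  intro n
  induction n with
  | zero => intro m hm; rw [Nat.le_zero.1 hm]
  | succ n ih =>
      intro m hm
      rcases Nat.lt_or_ge m (n+1) with hlt | hge
      · rw [Tseq_succ, Function.update_of_ne (by omega), ih m (by omega)]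
      · have : m = n+1 := by omega
        rw [this]

open Classical in
lemma Tseq_inv (p : ℕ) (hp : p.Prime) (e0 : A2) (he0 : tau e0 = 0) :
    ∀ n, tau (ghost p (Tseq p hp e0 n) n) = 0 := by
  intro n
  induction n with
  | zero =>
      unfold ghost
      rw [Finset.sum_range_one, pow_zero, one_mul, Nat.sub_self, pow_zero, pow_one]
      show tau (if (0:ℕ) = 0 then e0 else 0) = 0
      rw [if_pos rfl]
      exact he0
  | succ n ih =>
      rw [Tseq_succ, dif_pos ih]
      exact Classical.choose_spec (step_ex p hp (Tseq p hp e0 n) n ih)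

end S15


/-- for every sequence `(ε₀, ε₁, ...)` with all `ε_n ∈ [A,A]`, there is a
sequence `(r₀, r₁, ...) ∈ A^{ℕ₀}` with `r₀ = ε₀` such that every ghost component
`ω_n(r₀,...,r_n)` lies in `[A,A]`. -/
theorem stmt15 (p : ℕ) (hp : p.Prime) (ε : ℕ → A2)
    (hε : ∀ n, ε n ∈ AddSubgroup.closure commA) :
    ∃ r : ℕ → A2, r 0 = ε 0 ∧ ∀ n, ghost p r n ∈ AddSubgroup.closure commA := by

  have he0 : S15.tau (ε 0) = 0 := S15.tau_eq_zero_of_mem_S (hε 0)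
  refine ⟨fun m => S15.Tseq p hp (ε 0) m m, ?_, ?_⟩
  · show (if (0:ℕ) = 0 then ε 0 else 0) = ε 0
    rw [if_pos rfl]
  · intro n
    have hg : ghost p (fun m => S15.Tseq p hp (ε 0) m m) n
        = ghost p (S15.Tseq p hp (ε 0) n) n := by
      refine S15.ghost_congr p _ _ n (fun i hi => ?_)
      exact (S15.Tseq_stable p hp (ε 0) n i hi).symm
    rw [hg]
    exact S15.mem_S_of_tau_eq_zero (S15.Tseq_inv p hp (ε 0) he0 n)
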